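/- arXiv:2408.08598 — 3 statements merged into one kernel-verified Lean document; each statement's English description precedes it below -/
import Mathlib

section
/- For every positive integer k, b_2(K_{3^k − 1}) = (3^k − 1)/2. -/
open Finset

/-- The number of bicliques in the collection `f` that cover the pair `(u, v)`. -/
noncomputable def coversCount {V : Type*} {m : ℕ} (f : Fin m → Finset V × Finset V) (u v : V) : ℕ :=
  Nat.card {i : Fin m // (u ∈ (f i).1 ∧ v ∈ (f i).2) ∨ (u ∈ (f i).2 ∧ v ∈ (f i).1)}

/-- `f` is an odd cover of `G`: a collection of bicliques (pairs of disjoint finite sets of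
vertices) covering each edge of `G` an odd number of times and each nonedge an even number
of times. -/
def IsOddCover {V : Type*} (G : SimpleGraph V) {m : ℕ}
    (f : Fin m → Finset V × Finset V) : Prop :=
  (∀ i, Disjoint (f i).1 (f i).2) ∧
  ∀ u v : V, u ≠ v → (G.Adj u v ↔ Odd (coversCount f u v))

/-- `b2 G` is the minimum cardinality of an odd cover of `G`. -/
noncomputable def b2 {V : Type*} (G : SimpleGraph V) : ℕ :=
  sInf {m : ℕ | ∃ f : Fin m → Finset V × Finset V, IsOddCover G f}

/-- `r2 G` is the rank over `𝔽₂` of the adjacency matrix of `G`. -/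
noncomputable def r2 {V : Type*} [Fintype V] (G : SimpleGraph V) : ℕ :=
  letI := Classical.decRel G.Adj
  (SimpleGraph.adjMatrix (ZMod 2) G).rank

/-- Disjoint union of an indexed family of graphs, on the sigma type of the vertex types. -/
def sigmaSum {ι : Type*} {α : ι → Type*} (G : (i : ι) → SimpleGraph (α i)) :
    SimpleGraph ((i : ι) × α i) where
  Adj x y := ∃ (i : ι) (a b : α i), (G i).Adj a b ∧ x = ⟨i, a⟩ ∧ y = ⟨i, b⟩
  symm := ⟨by rintro x y ⟨i, a, b, h, rfl, rfl⟩; exact ⟨i, b, a, h.symm, rfl, rfl⟩⟩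
  loopless := ⟨by
    rintro x ⟨i, a, b, h, rfl, h2⟩
    obtain ⟨-, h3⟩ := Sigma.mk.inj_iff.mp h2
    exact (G i).loopless.irrefl a (by cases h3; exact h)⟩


namespace Stmt13


open Matrix

abbrev V3 (k : ℕ) := Fin k → ZMod 3

variable {k : ℕ}

noncomputable def ord (t : V3 k) : ℕ := (Fintype.equivFin (V3 k) t : ℕ)

lemma ord_inj : Function.Injective (ord (k := k)) := fun a b h =>
  (Fintype.equivFin (V3 k)).injective (Fin.val_injective h)

lemma neg_ne_self {t : V3 k} (ht : t ≠ 0) : -t ≠ t := by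
  intro h
  apply ht
  funext j
  have h2 : -(t j) = t j := congrFun h j
  have h3 : ∀ a : ZMod 3, -a = a → a = 0 := by decide
  exact h3 _ h2

noncomputable def TT (k : ℕ) : Finset (V3 k) :=
  univ.filter (fun t => t ≠ 0 ∧ ord t < ord (-t))

lemma mem_TT {t : V3 k} : t ∈ TT k ↔ t ≠ 0 ∧ ord t < ord (-t) := by
  simp [TT]

lemma ne_zero_of_mem_TT {t : V3 k} (h : t ∈ TT k) : t ≠ 0 := (mem_TT.1 h).1

lemma neg_mem_TT {t : V3 k} (ht : t ≠ 0) : -t ∈ TT k ↔ t ∉ TT k := by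
  rw [mem_TT, mem_TT, neg_neg]
  have hne : ord (-t) ≠ ord t := fun he => neg_ne_self ht (ord_inj he)
  have htn : -t ≠ 0 := fun h0 => ht (by simpa using h0)
  constructor
  · rintro ⟨-, h2⟩ ⟨-, h4⟩; exact lt_asymm h2 h4
  · intro h
    refine ⟨htn, ?_⟩
    rcases lt_or_gt_of_ne hne with h1 | h1
    · exact h1
    · exact absurd ⟨ht, h1⟩ h

lemma pairing_card (P : V3 k → Prop) [DecidablePred P] (hP0 : ∀ t, P t → t ≠ 0)
    (hPneg : ∀ t, P t → P (-t)) :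
    (univ.filter P).card = 2 * ((TT k).filter P).card := by
  have hsplit := Finset.card_filter_add_card_filter_not
    (s := univ.filter P) (p := fun t => t ∈ TT k)
  have hA : ((univ.filter P).filter (fun t => t ∈ TT k)).card = ((TT k).filter P).card := by
    congr 1
    ext t
    simp only [Finset.mem_filter, Finset.mem_univ, true_and, and_comm]
  have hB : ((univ.filter P).filter (fun t => t ∉ TT k)).card
      = ((univ.filter P).filter (fun t => t ∈ TT k)).card := by
    apply Finset.card_bij' (fun t _ => -t) (fun t _ => -t)
    · intro t _; simp
    · intro t _; simp
    · intro t ht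
      simp only [Finset.mem_filter, Finset.mem_univ, true_and] at ht ⊢
      exact ⟨hPneg t ht.1, (neg_mem_TT (hP0 t ht.1)).2 ht.2⟩
    · intro t ht
      simp only [Finset.mem_filter, Finset.mem_univ, true_and] at ht ⊢
      exact ⟨hPneg t ht.1, fun hmem => ((neg_mem_TT (hP0 t ht.1)).1 hmem) ht.2⟩
  omega

def cond (u v t : V3 k) : Prop :=
  (u ⬝ᵥ t = 1 ∧ v ⬝ᵥ t = 2) ∨ (u ⬝ᵥ t = 2 ∧ v ⬝ᵥ t = 1)

instance {u v : V3 k} : DecidablePred (cond u v) := fun t => by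
  unfold cond; infer_instance

lemma cond_ne_zero {u v t : V3 k} (h : cond u v t) : t ≠ 0 := by
  rintro rfl
  rcases h with ⟨h1, -⟩ | ⟨h1, -⟩ <;> rw [dotProduct_zero] at h1 <;> exact absurd h1 (by decide)

lemma cond_neg {u v t : V3 k} (h : cond u v t) : cond u v (-t) := by
  have e1 : -(1 : ZMod 3) = 2 := by decide
  have e2 : -(2 : ZMod 3) = 1 := by decide
  rcases h with ⟨h1, h2⟩ | ⟨h1, h2⟩
  · exact Or.inr ⟨by rw [dotProduct_neg, h1, e1], by rw [dotProduct_neg, h2, e2]⟩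
  · exact Or.inl ⟨by rw [dotProduct_neg, h1, e2], by rw [dotProduct_neg, h2, e1]⟩

lemma exists_dot_eq {w : V3 k} (hw : w ≠ 0) (a : ZMod 3) : ∃ t, w ⬝ᵥ t = a := by
  have hj : ∃ j, w j ≠ 0 := by
    by_contra h; push_neg at h; exact hw (funext h)
  obtain ⟨j, hj⟩ := hj
  exact ⟨Pi.single j ((w j)⁻¹ * a),
    by rw [dotProduct_single, ← mul_assoc, mul_inv_cancel₀ hj, one_mul]⟩

lemma exists_dot_pair {u v : V3 k} (hu : u ≠ 0) (hv : v ≠ 0) (huv : u ≠ v) :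
    ∃ t, u ⬝ᵥ t = 1 ∧ v ⬝ᵥ t = 2 := by
  by_contra hcon
  push_neg at hcon
  obtain ⟨t1, ht1⟩ := exists_dot_eq hu 1
  have hcases : ∀ a : ZMod 3, a = 0 ∨ a = 1 ∨ a = 2 := by decide
  rcases hcases (v ⬝ᵥ t1) with h0 | h1 | h2
  · obtain ⟨t, ht⟩ := exists_dot_eq hv 2
    refine hcon (t + (1 - u ⬝ᵥ t) • t1) ?_ ?_
    · rw [dotProduct_add, dotProduct_smul, ht1, smul_eq_mul]; ring
    · rw [dotProduct_add, dotProduct_smul, h0, ht, smul_eq_mul]; ring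
  · have hvu : v - u ≠ 0 := fun h => huv (by
      have h2 := congrArg (· + u) h; simpa using h2.symm)
    obtain ⟨t, ht⟩ := exists_dot_eq hvu 1
    rw [sub_dotProduct] at ht
    refine hcon (t + (1 - u ⬝ᵥ t) • t1) ?_ ?_
    · rw [dotProduct_add, dotProduct_smul, ht1, smul_eq_mul]; ring
    · rw [dotProduct_add, dotProduct_smul, h1, smul_eq_mul]
      linear_combination ht
  · exact hcon t1 ht1 h2

lemma card_fiber_odd {u v : V3 k} (h : ∃ t0 : V3 k, u ⬝ᵥ t0 = 1 ∧ v ⬝ᵥ t0 = 2) :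
    Odd (univ.filter (fun t : V3 k => u ⬝ᵥ t = 1 ∧ v ⬝ᵥ t = 2)).card := by
  obtain ⟨t0, h1, h2⟩ := h
  let φ : V3 k →ₗ[ZMod 3] (ZMod 3) × (ZMod 3) :=
    { toFun := fun t => (u ⬝ᵥ t, v ⬝ᵥ t)
      map_add' := fun a b => by simp [dotProduct_add, Prod.ext_iff]
      map_smul' := fun c a => by simp [dotProduct_smul, Prod.ext_iff] }
  have hφ : ∀ t, φ t = (u ⬝ᵥ t, v ⬝ᵥ t) := fun t => rfl
  have hker : ∀ t, t ∈ LinearMap.ker φ ↔ (u ⬝ᵥ t = 0 ∧ v ⬝ᵥ t = 0) := by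
    intro t
    rw [LinearMap.mem_ker, hφ, Prod.mk_eq_zero]
  let e : {t : V3 k // u ⬝ᵥ t = 1 ∧ v ⬝ᵥ t = 2} ≃ LinearMap.ker φ :=
    { toFun := fun t => ⟨t.1 - t0, (hker _).2
        ⟨by rw [dotProduct_sub, t.2.1, h1, sub_self], by rw [dotProduct_sub, t.2.2, h2, sub_self]⟩⟩
      invFun := fun s => ⟨s.1 + t0, by
        have hs := (hker _).1 s.2
        exact ⟨by rw [dotProduct_add, hs.1, h1, zero_add],
               by rw [dotProduct_add, hs.2, h2, zero_add]⟩⟩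
      left_inv := fun t => by ext; simp
      right_inv := fun s => by ext; simp }
  letI : Fintype (LinearMap.ker φ) := Fintype.ofFinite _
  have hcard : (univ.filter (fun t : V3 k => u ⬝ᵥ t = 1 ∧ v ⬝ᵥ t = 2)).card
      = Fintype.card (LinearMap.ker φ) := by
    rw [← Fintype.card_subtype]
    exact Fintype.card_congr e
  rw [hcard, Module.card_eq_pow_finrank (K := ZMod 3) (V := LinearMap.ker φ), ZMod.card]
  exact (Nat.odd_iff.2 rfl : Odd 3).pow

lemma card_fiber_symm (u v : V3 k) :
    (univ.filter (fun t : V3 k => u ⬝ᵥ t = 2 ∧ v ⬝ᵥ t = 1)).card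
      = (univ.filter (fun t : V3 k => u ⬝ᵥ t = 1 ∧ v ⬝ᵥ t = 2)).card := by
  classical
  have e1 : -(1 : ZMod 3) = 2 := by decide
  have e2 : -(2 : ZMod 3) = 1 := by decide
  apply Finset.card_bij' (fun t _ => -t) (fun t _ => -t)
  · intro t _; simp
  · intro t _; simp
  · intro t ht
    simp only [Finset.mem_filter, Finset.mem_univ, true_and] at ht ⊢
    exact ⟨by rw [dotProduct_neg, ht.1, e2], by rw [dotProduct_neg, ht.2, e1]⟩
  · intro t ht
    simp only [Finset.mem_filter, Finset.mem_univ, true_and] at ht ⊢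
    exact ⟨by rw [dotProduct_neg, ht.1, e1], by rw [dotProduct_neg, ht.2, e2]⟩

lemma odd_TT_filter {u v : V3 k} (hu : u ≠ 0) (hv : v ≠ 0) (huv : u ≠ v) :
    Odd ((TT k).filter (cond u v)).card := by
  have hp := pairing_card (cond u v) (fun t => cond_ne_zero) (fun t => cond_neg)
  have hsplit : (univ.filter (cond u v)).card
      = (univ.filter (fun t : V3 k => u ⬝ᵥ t = 1 ∧ v ⬝ᵥ t = 2)).card
      + (univ.filter (fun t : V3 k => u ⬝ᵥ t = 2 ∧ v ⬝ᵥ t = 1)).card := by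
    rw [← Finset.card_union_of_disjoint ?hdis]
    case hdis =>
      rw [Finset.disjoint_left]
      rintro t ht1 ht2
      simp only [Finset.mem_filter] at ht1 ht2
      rw [ht1.2.1] at ht2
      exact absurd ht2.2.1 (by decide)
    congr 1
    ext t
    simp only [Finset.mem_filter, Finset.mem_univ, true_and, Finset.mem_union]
    exact Iff.rfl
  have hodd := card_fiber_odd (exists_dot_pair hu hv huv)
  rw [card_fiber_symm] at hsplit
  obtain ⟨r, hr⟩ := hodd
  exact ⟨r, by omega⟩

lemma two_mul_card_TT : 2 * (TT k).card = 3 ^ k - 1 := by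
  have h := pairing_card (fun t : V3 k => t ≠ 0) (fun t ht => ht)
    (fun t ht h0 => ht (by simpa using h0))
  have h1 : (univ.filter (fun t : V3 k => t ≠ 0)).card = 3 ^ k - 1 := by
    rw [Finset.filter_ne', Finset.card_erase_of_mem (Finset.mem_univ _), Finset.card_univ]
    congr 1
    rw [Fintype.card_fun, ZMod.card, Fintype.card_fin]
  have h2 : (TT k).filter (fun t : V3 k => t ≠ 0) = TT k :=
    Finset.filter_true_of_mem (fun t ht => ne_zero_of_mem_TT ht)
  rw [h1, h2] at h
  omega

abbrev W (k : ℕ) := {x : V3 k // x ≠ 0}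

lemma card_W : Fintype.card (W k) = 3 ^ k - 1 := by
  have h1 : Fintype.card (W k) = Fintype.card (V3 k) - 1 := by
    have := Fintype.card_subtype_compl (α := V3 k) (p := fun x => x = 0)
    simpa [Fintype.card_subtype_eq] using this
  rw [h1, Fintype.card_fun, ZMod.card, Fintype.card_fin]

lemma exists_oddCover_W (k : ℕ) :
    ∃ F : Fin ((3 ^ k - 1) / 2) → Finset (W k) × Finset (W k),
      IsOddCover (⊤ : SimpleGraph (W k)) F := by
  have htwo := two_mul_card_TT (k := k)
  have hTc : (TT k).card = (3 ^ k - 1) / 2 := by omega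
  let e0 : Fin ((3 ^ k - 1) / 2) ≃ {t // t ∈ TT k} :=
    (Fintype.equivFinOfCardEq (by rw [Fintype.card_coe, hTc])).symm
  refine ⟨fun i => (univ.filter (fun x : W k => x.1 ⬝ᵥ (e0 i).1 = 1),
                    univ.filter (fun x : W k => x.1 ⬝ᵥ (e0 i).1 = 2)), ?_, ?_⟩
  · intro i
    rw [Finset.disjoint_left]
    intro x hx1 hx2
    simp only [Finset.mem_filter, Finset.mem_univ, true_and] at hx1 hx2
    rw [hx1] at hx2
    exact absurd hx2 (by decide)
  · intro u v huv
    rw [SimpleGraph.top_adj]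
    refine iff_of_true huv ?_
    have hcc : coversCount
        (fun i => (univ.filter (fun x : W k => x.1 ⬝ᵥ (e0 i).1 = 1),
                   univ.filter (fun x : W k => x.1 ⬝ᵥ (e0 i).1 = 2))) u v
        = ((TT k).filter (cond u.1 v.1)).card := by
      unfold coversCount
      rw [Nat.card_congr ((Equiv.subtypeEquiv e0 (fun i => by
        simp only [Finset.mem_filter, Finset.mem_univ, true_and]
        exact Iff.rfl)).trans (Equiv.subtypeSubtypeEquivSubtypeInter
          (fun t => t ∈ TT k) (cond u.1 v.1)))]
      rw [Nat.card_eq_fintype_card, Fintype.card_subtype]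
      congr 1
      ext t
      simp only [Finset.mem_filter, Finset.mem_univ, true_and]
    rw [hcc]
    exact odd_TT_filter u.2 v.2 (fun h => huv (Subtype.ext h))

lemma isOddCover_top_map {α β : Type*} (e : α ≃ β) {m : ℕ} (F : Fin m → Finset β × Finset β)
    (hF : IsOddCover (⊤ : SimpleGraph β) F) :
    IsOddCover (⊤ : SimpleGraph α)
      (fun i => ((F i).1.map e.symm.toEmbedding, (F i).2.map e.symm.toEmbedding)) := by
  obtain ⟨hd, hc⟩ := hF
  constructor
  · intro i
    exact Finset.disjoint_map _ |>.2 (hd i)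
  · intro u v huv
    have henuv : e u ≠ e v := fun h => huv (e.injective h)
    have h2 := hc (e u) (e v) henuv
    rw [SimpleGraph.top_adj] at h2 ⊢
    have hcc : coversCount
        (fun i => ((F i).1.map e.symm.toEmbedding, (F i).2.map e.symm.toEmbedding)) u v
        = coversCount F (e u) (e v) :=
      Nat.card_congr (Equiv.subtypeEquivRight (fun i => by
        simp only [Finset.mem_map_equiv, Equiv.symm_symm]))
    rw [hcc]
    exact iff_of_true huv (h2.1 henuv)

lemma exists_oddCover_fin (k : ℕ) :
    ∃ F : Fin ((3 ^ k - 1) / 2) → Finset (Fin (3 ^ k - 1)) × Finset (Fin (3 ^ k - 1)),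
      IsOddCover (⊤ : SimpleGraph (Fin (3 ^ k - 1))) F := by
  obtain ⟨F, hF⟩ := exists_oddCover_W k
  let e : Fin (3 ^ k - 1) ≃ W k := (Fintype.equivFinOfCardEq card_W).symm
  exact ⟨_, isOddCover_top_map e F hF⟩



open Matrix

lemma matrix_rank_add_le {n : ℕ} (A B : Matrix (Fin n) (Fin n) (ZMod 2)) :
    (A + B).rank ≤ A.rank + B.rank := by
  have hadd : (A + B).mulVecLin = A.mulVecLin + B.mulVecLin := Matrix.mulVecLin_add A B
  rw [Matrix.rank, Matrix.rank, Matrix.rank, hadd]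
  have hr : LinearMap.range (A.mulVecLin + B.mulVecLin)
      ≤ LinearMap.range A.mulVecLin ⊔ LinearMap.range B.mulVecLin := by
    rintro _ ⟨t, rfl⟩
    exact Submodule.mem_sup.2 ⟨_, ⟨t, rfl⟩, _, ⟨t, rfl⟩, rfl⟩
  calc Module.finrank (ZMod 2) (LinearMap.range (A.mulVecLin + B.mulVecLin))
      ≤ Module.finrank (ZMod 2)
        (LinearMap.range A.mulVecLin ⊔ LinearMap.range B.mulVecLin : Submodule _ _) :=
        Submodule.finrank_mono hr
    _ ≤ _ := Submodule.finrank_add_le_finrank_add_finrank _ _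

lemma matrix_rank_sum_le {n m : ℕ} (A : Fin m → Matrix (Fin n) (Fin n) (ZMod 2)) :
    (∑ i, A i).rank ≤ ∑ i, (A i).rank := by
  classical
  induction (univ : Finset (Fin m)) using Finset.cons_induction with
  | empty => simp
  | cons a s ha ih =>
    rw [Finset.sum_cons, Finset.sum_cons]
    exact (matrix_rank_add_le _ _).trans (Nat.add_le_add_left ih _)

lemma rank_vecMulVec_le {n : ℕ} (a b : Fin n → ZMod 2) :
    (vecMulVec a b).rank ≤ 1 := by
  rw [Matrix.vecMulVec_eq (Fin 1)]
  calc (replicateCol (Fin 1) a * replicateRow (Fin 1) b).rank ≤ (replicateCol (Fin 1) a).rank := Matrix.rank_mul_le_left _ _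
    _ ≤ Fintype.card (Fin 1) := Matrix.rank_le_card_width _
    _ = 1 := by simp

lemma lower_bound {n m : ℕ} (hn : Even n)
    (f : Fin m → Finset (Fin n) × Finset (Fin n))
    (hf : IsOddCover (⊤ : SimpleGraph (Fin n)) f) : n ≤ 2 * m := by
  classical
  obtain ⟨hdisj, hcov⟩ := hf
  set x : Fin m → Fin n → ZMod 2 := fun i w => if w ∈ (f i).1 then 1 else 0 with hx
  set y : Fin m → Fin n → ZMod 2 := fun i w => if w ∈ (f i).2 then 1 else 0 with hy
  set M : Matrix (Fin n) (Fin n) (ZMod 2) :=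
    ∑ i, (vecMulVec (x i) (y i) + vecMulVec (y i) (x i)) with hM
  have hkey : M = Matrix.of (fun _ _ => (1 : ZMod 2)) + 1 := by
    ext u w
    rw [hM, Matrix.sum_apply]
    simp only [Matrix.add_apply, Matrix.vecMulVec_apply, Matrix.of_apply]
    by_cases huw : u = w
    · subst huw
      have hzero : ∀ i ∈ (univ : Finset (Fin m)),
          x i u * y i u + y i u * x i u = 0 := by
        intro i _
        have h0 : x i u * y i u = 0 := by
          by_cases h1 : u ∈ (f i).1
          · have h2 : u ∉ (f i).2 := Finset.disjoint_left.mp (hdisj i) h1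
            simp [hy, h2]
          · simp [hx, h1]
        rw [mul_comm (y i u) (x i u), h0, add_zero]
      rw [Finset.sum_congr rfl hzero, Finset.sum_const, smul_zero, Matrix.one_apply_eq]
      decide
    · have hterm : ∀ i ∈ (univ : Finset (Fin m)), x i u * y i w + y i u * x i w
          = if (u ∈ (f i).1 ∧ w ∈ (f i).2) ∨ (u ∈ (f i).2 ∧ w ∈ (f i).1)
            then (1 : ZMod 2) else 0 := by
        intro i _
        have hab : ¬(u ∈ (f i).1 ∧ u ∈ (f i).2) :=
          fun ⟨h1, h2⟩ => Finset.disjoint_left.mp (hdisj i) h1 h2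
        have hcd : ¬(w ∈ (f i).1 ∧ w ∈ (f i).2) :=
          fun ⟨h1, h2⟩ => Finset.disjoint_left.mp (hdisj i) h1 h2
        by_cases a : u ∈ (f i).1 <;> by_cases b : u ∈ (f i).2 <;>
          by_cases c : w ∈ (f i).1 <;> by_cases d : w ∈ (f i).2 <;>
          first
            | exact (hab ⟨‹_›, ‹_›⟩).elim
            | exact (hcd ⟨‹_›, ‹_›⟩).elim
            | simp [hx, hy, a, b, c, d]
      rw [Finset.sum_congr rfl hterm, Finset.sum_boole]
      have hc : coversCount f u w
          = ((univ : Finset (Fin m)).filter (fun i =>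
              (u ∈ (f i).1 ∧ w ∈ (f i).2) ∨ (u ∈ (f i).2 ∧ w ∈ (f i).1))).card := by
        unfold coversCount
        rw [Nat.card_eq_fintype_card, Fintype.card_subtype]
      have hodd : Odd (coversCount f u w) := (hcov u w huw).1 (by simp [huw])
      rw [hc] at hodd
      rw [Nat.odd_iff] at hodd
      have hone : (((univ : Finset (Fin m)).filter (fun i =>
              (u ∈ (f i).1 ∧ w ∈ (f i).2) ∨ (u ∈ (f i).2 ∧ w ∈ (f i).1))).card : ZMod 2)
          = 1 := by
        rw [← ZMod.natCast_mod, hodd, Nat.cast_one]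
      rw [hone, Matrix.one_apply_ne huw, add_zero]
  -- rank computations
  have hrankM : M.rank ≤ 2 * m := by
    calc M.rank ≤ ∑ i : Fin m, (vecMulVec (x i) (y i) + vecMulVec (y i) (x i)).rank :=
          matrix_rank_sum_le _
      _ ≤ ∑ _i : Fin m, 2 := by
          refine Finset.sum_le_sum (fun i _ => ?_)
          calc (vecMulVec (x i) (y i) + vecMulVec (y i) (x i)).rank
              ≤ (vecMulVec (x i) (y i)).rank + (vecMulVec (y i) (x i)).rank :=
                matrix_rank_add_le _ _
            _ ≤ 1 + 1 := Nat.add_le_add (rank_vecMulVec_le _ _) (rank_vecMulVec_le _ _)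
      _ = 2 * m := by simp [Finset.sum_const, mul_comm]
  have hunit : IsUnit (Matrix.of (fun _ _ => (1 : ZMod 2)) + 1 : Matrix (Fin n) (Fin n) (ZMod 2)) := by
    set J : Matrix (Fin n) (Fin n) (ZMod 2) := Matrix.of (fun _ _ => (1 : ZMod 2)) with hJ
    have hJJ : J * J = 0 := by
      ext u v
      rw [Matrix.mul_apply]
      simp only [hJ, Matrix.of_apply, one_mul, Matrix.zero_apply]
      rw [Finset.sum_const, Finset.card_univ, Fintype.card_fin, nsmul_eq_mul, mul_one]
      rw [ZMod.natCast_eq_zero_iff]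
      exact hn.two_dvd
    have hsq : (J + 1) * (J + 1) = 1 := by
      rw [add_mul, mul_add, mul_add, hJJ, mul_one, one_mul, one_mul]
      have hJ2 : J + J = 0 := by
        ext u v; simp only [Matrix.add_apply, Matrix.zero_apply, hJ, Matrix.of_apply]; decide
      calc 0 + J + (J + 1) = (J + J) + 1 := by abel
        _ = 1 := by rw [hJ2, zero_add]
    exact ⟨⟨J + 1, J + 1, hsq, hsq⟩, rfl⟩
  have hrankJ : (Matrix.of (fun _ _ => (1 : ZMod 2)) + 1 : Matrix (Fin n) (Fin n) (ZMod 2)).rank = n := by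
    rw [Matrix.rank_of_isUnit _ hunit, Fintype.card_fin]
  rw [hkey, hrankJ] at hrankM
  exact hrankM


end Stmt13

/-- For every positive integer `k`, `b₂(K_{3^k − 1}) = (3^k − 1) / 2`. -/
theorem stmt13 (k : ℕ) (hk : 1 ≤ k) :
    b2 (⊤ : SimpleGraph (Fin (3 ^ k - 1))) = (3 ^ k - 1) / 2 := by
  have hodd3 : Odd (3 ^ k) := Odd.pow (by decide)
  have heven : Even (3 ^ k - 1) := Nat.Odd.sub_odd hodd3 odd_one
  apply le_antisymm
  · obtain ⟨F, hF⟩ := Stmt13.exists_oddCover_fin k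
    exact Nat.sInf_le ⟨F, hF⟩
  · refine le_csInf ⟨(3 ^ k - 1) / 2, Stmt13.exists_oddCover_fin k⟩ ?_
    intro m hm
    obtain ⟨f, hf⟩ : ∃ f : Fin m → Finset (Fin (3 ^ k - 1)) × Finset (Fin (3 ^ k - 1)),
        IsOddCover (⊤ : SimpleGraph (Fin (3 ^ k - 1))) f := hm
    have hlow := Stmt13.lower_bound heven f hf
    omega
end

section
/- Let k ≥ 1 and let {(X_1, Y_1), …, (X_k, Y_k)} be the partite-set pairs of k bicliques forming a perfect odd cover of the complete graph K_{2k}, and set U_i = X_i ∪ Y_i for 1 ≤ i ≤ k. Then every vertex of K_{2k} is contained in an odd number of the sets U_1, …, U_k. -/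
open Finset

private lemma odd_iff_cast_eq_one (n : ℕ) : Odd n ↔ (n : ZMod 2) = 1 := by
  constructor
  · rintro ⟨m, rfl⟩
    push_cast
    rw [show (2 : ZMod 2) = 0 from rfl]
    ring
  · intro h
    rcases Nat.even_or_odd n with ⟨m, rfl⟩ | ho
    · exfalso
      push_cast at h
      rw [show ((m : ZMod 2) + m) = 2 * m by ring, show (2 : ZMod 2) = 0 from rfl] at h
      simp at h
    · exact ho

private lemma main_aux (k : ℕ) (x y : Fin k → Fin (2 * k) → ZMod 2)
    (hxy : ∀ i u, x i u * y i u = 0)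
    (hxx : ∀ i u, x i u * x i u = x i u)
    (hM : ∀ u w : Fin (2 * k), u ≠ w → ∑ i, (x i u * y i w + y i u * x i w) = 1) :
    ∀ v, ∑ i, (x i v + y i v) = 1 := by
  classical
  have h2 : (2 : ZMod 2) = 0 := rfl
  have hdiag : ∀ u, ∑ i, (x i u * y i u + y i u * x i u) = 0 := by
    intro u
    apply Finset.sum_eq_zero
    intro i _
    rw [mul_comm (y i u), hxy]
    ring
  -- the key: action of the matrix J + I on a vector, two ways
  have key : ∀ (z : Fin (2 * k) → ZMod 2) (u : Fin (2 * k)),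
      ∑ i, ((∑ w, y i w * z w) * x i u + (∑ w, x i w * z w) * y i u)
        = (∑ w, z w) + z u := by
    intro z u
    have step1 : ∑ i, ((∑ w, y i w * z w) * x i u + (∑ w, x i w * z w) * y i u)
        = ∑ w, z w * (∑ i, (x i u * y i w + y i u * x i w)) := by
      calc ∑ i, ((∑ w, y i w * z w) * x i u + (∑ w, x i w * z w) * y i u)
          = ∑ i, ∑ w, z w * (x i u * y i w + y i u * x i w) := by
            refine Finset.sum_congr rfl fun i _ => ?_
            rw [Finset.sum_mul, Finset.sum_mul, ← Finset.sum_add_distrib]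
            exact Finset.sum_congr rfl fun w _ => by ring
        _ = ∑ w, ∑ i, z w * (x i u * y i w + y i u * x i w) := Finset.sum_comm
        _ = ∑ w, z w * ∑ i, (x i u * y i w + y i u * x i w) := by
            exact Finset.sum_congr rfl fun w _ => (Finset.mul_sum _ _ _).symm
    rw [step1]
    have step2 : ∀ w, z w * (∑ i, (x i u * y i w + y i u * x i w))
        = z w + (if w = u then z w else 0) := by
      intro w
      by_cases h : w = u
      · subst h
        rw [hdiag, mul_zero]
        simp [CharTwo.add_self_eq_zero]
      · rw [hM u w (Ne.symm h)]
        simp [h]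
    rw [Finset.sum_congr rfl fun w _ => step2 w, Finset.sum_add_distrib,
      Finset.sum_ite_eq' Finset.univ u z]
    simp

  -- the spanning family
  set g : Fin k × Bool → (Fin (2 * k) → ZMod 2) :=
    fun p => if p.2 = true then y p.1 else x p.1 with hg
  have hspan : ∀ z : Fin (2 * k) → ZMod 2,
      z ∈ Submodule.span (ZMod 2) (Set.range g) := by
    intro z
    rw [Submodule.mem_span_range_iff_exists_fun]
    refine ⟨fun p => if p.2 = true then (∑ v, x p.1 v * ((∑ t, z t) + z v))
      else (∑ v, y p.1 v * ((∑ t, z t) + z v)), ?_⟩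
    funext u
    rw [Finset.sum_apply]
    simp only [Pi.smul_apply, smul_eq_mul]
    rw [Fintype.sum_prod_type]
    have : ∀ i : Fin k, ∑ b : Bool,
        (if b = true then (∑ v, x i v * ((∑ t, z t) + z v))
          else (∑ v, y i v * ((∑ t, z t) + z v))) * (g (i, b)) u
        = ((∑ v, y i v * ((∑ t, z t) + z v)) * x i u
          + (∑ v, x i v * ((∑ t, z t) + z v)) * y i u) := by
      intro i
      rw [Fintype.sum_bool]
      simp [hg]
      ring
    rw [Finset.sum_congr rfl fun i _ => this i, key (fun t => (∑ t', z t') + z t) u]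
    have hsum : ∑ t : Fin (2 * k), ((∑ t', z t') + z t)
        = (2 * k) • (∑ t', z t') + ∑ t, z t := by
      rw [Finset.sum_add_distrib, Finset.sum_const, Finset.card_univ, Fintype.card_fin]
    rw [hsum]
    have hcst : ((2 * k) : ℕ) • (∑ t', z t') = 0 := by
      rw [nsmul_eq_mul]
      push_cast
      rw [h2]
      ring
    rw [hcst]
    linear_combination (∑ t' : Fin (2 * k), z t') * h2
  have hcard : Fintype.card (Fin k × Bool)
      = Module.finrank (ZMod 2) (Fin (2 * k) → ZMod 2) := by
    rw [Module.finrank_fintype_fun_eq_card]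
    simp [Fintype.card_prod]
    ring
  have hli : LinearIndependent (ZMod 2) g :=
    linearIndependent_of_top_le_span_of_card_eq_finrank
      (fun z _ => hspan z) hcard
  obtain ⟨c, hc⟩ := (Submodule.mem_span_range_iff_exists_fun (ZMod 2)).mp (hspan (fun _ => 1))
  -- pointwise form of hc
  have hc' : ∀ u : Fin (2 * k),
      ∑ i, (c (i, false) * x i u + c (i, true) * y i u) = 1 := by
    intro u
    have := congrFun hc u
    rw [Finset.sum_apply] at this
    simp only [Pi.smul_apply, smul_eq_mul] at this
    rw [Fintype.sum_prod_type] at this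
    rw [← this]
    refine Finset.sum_congr rfl fun i _ => ?_
    rw [Fintype.sum_bool]
    simp [hg]
    ring
  -- the coefficients are all 1
  have hcone : ∀ j, c (j, false) = 1 ∧ c (j, true) = 1 := by
    intro j
    set sx : ZMod 2 := ∑ w, x j w with hsx
    set e : Fin k × Bool → ZMod 2 := fun p =>
      if p.2 = true then (∑ w, x p.1 w * x j w) + sx * c p
      else (∑ w, y p.1 w * x j w) + sx * c p + (if p.1 = j then 1 else 0) with he
    have heq : ∑ p, e p • g p = 0 := by
      funext u
      rw [Finset.sum_apply]
      simp only [Pi.smul_apply, smul_eq_mul, Pi.zero_apply]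
      rw [Fintype.sum_prod_type]
      have hterm : ∀ i : Fin k, ∑ b : Bool, e (i, b) * (g (i, b)) u
          = ((∑ w, y i w * x j w) * x i u + (∑ w, x i w * x j w) * y i u)
            + sx * (c (i, false) * x i u + c (i, true) * y i u)
            + (if i = j then 1 else 0) * x i u := by
        intro i
        rw [Fintype.sum_bool]
        by_cases hij : i = j <;> simp [he, hg, hij] <;> ring
      rw [Finset.sum_congr rfl fun i _ => hterm i]
      rw [Finset.sum_add_distrib, Finset.sum_add_distrib, key (x j) u,
        ← Finset.mul_sum, hc' u]
      have hite : ∑ i, (if i = j then (1 : ZMod 2) else 0) * x i u = x j u := by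
        rw [Finset.sum_congr rfl (fun i _ => by rw [ite_mul, one_mul, zero_mul]),
          Finset.sum_ite_eq' Finset.univ j (fun i => x i u)]
        simp
      rw [hite]
      linear_combination (sx + x j u) * h2
    have h0 := Fintype.linearIndependent_iff.mp hli e heq
    have hF := h0 (j, false)
    have hT := h0 (j, true)
    simp [he] at hF hT
    have hyx0 : ∑ w, y j w * x j w = 0 := by
      apply Finset.sum_eq_zero
      intro w _
      rw [mul_comm]
      exact hxy j w
    have hxx' : ∑ w, x j w * x j w = sx := by
      rw [hsx]
      exact Finset.sum_congr rfl fun w _ => hxx j w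
    rw [hyx0, zero_add] at hF
    rw [hxx'] at hT
    -- hF : sx * c (j, false) + 1 = 0, hT : sx + sx * c (j, true) = 0
    have key2 : ∀ a b : ZMod 2, a * b + 1 = 0 → a = 1 ∧ b = 1 := by decide
    obtain ⟨hsx1, hcf⟩ := key2 _ _ hF
    refine ⟨hcf, ?_⟩
    rw [hsx1] at hT
    have : ∀ b : ZMod 2, 1 + 1 * b = 0 → b = 1 := by decide
    exact this _ hT
  intro v
  rw [← hc' v]
  refine Finset.sum_congr rfl fun i _ => ?_
  rw [(hcone i).1, (hcone i).2, one_mul, one_mul]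

/-- In a perfect odd cover `(X₁,Y₁),…,(X_k,Y_k)` of `K_{2k}`, setting
`Uᵢ = Xᵢ ∪ Yᵢ`, every vertex is contained in an odd number of the sets `Uᵢ`. -/
theorem stmt17 (k : ℕ) (hk : 1 ≤ k)
    (f : Fin k → Finset (Fin (2 * k)) × Finset (Fin (2 * k)))
    (hf : IsOddCover (⊤ : SimpleGraph (Fin (2 * k))) f) :
    ∀ v : Fin (2 * k),
      Odd ((Finset.univ.filter (fun i : Fin k => v ∈ (f i).1 ∪ (f i).2)).card) := by
  classical
  obtain ⟨hdisj, hcov⟩ := hf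
  set x : Fin k → Fin (2 * k) → ZMod 2 :=
    fun i u => if u ∈ (f i).1 then 1 else 0 with hx
  set y : Fin k → Fin (2 * k) → ZMod 2 :=
    fun i u => if u ∈ (f i).2 then 1 else 0 with hy
  have hxy : ∀ i u, x i u * y i u = 0 := by
    intro i u
    by_cases h1 : u ∈ (f i).1
    · have h2 : u ∉ (f i).2 := Finset.disjoint_left.mp (hdisj i) h1
      simp [hx, hy, h1, h2]
    · simp [hx, h1]
  have hxx : ∀ i u, x i u * x i u = x i u := by
    intro i u
    by_cases h1 : u ∈ (f i).1 <;> simp [hx, h1]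
  have hM : ∀ u w : Fin (2 * k), u ≠ w →
      ∑ i, (x i u * y i w + y i u * x i w) = 1 := by
    intro u w huw
    have hodd : Odd (coversCount f u w) := (hcov u w huw).mp (by simp [huw])
    have hterm : ∀ i, x i u * y i w + y i u * x i w
        = if ((u ∈ (f i).1 ∧ w ∈ (f i).2) ∨ (u ∈ (f i).2 ∧ w ∈ (f i).1))
          then 1 else 0 := by
      intro i
      have hd := Finset.disjoint_left.mp (hdisj i)
      by_cases h1 : u ∈ (f i).1 <;> by_cases h2 : u ∈ (f i).2 <;>
        by_cases h3 : w ∈ (f i).1 <;> by_cases h4 : w ∈ (f i).2 <;>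
        first
          | exact absurd h2 (fun hh => (hd h1 hh))
          | exact absurd h4 (fun hh => (hd h3 hh))
          | simp [hx, hy, h1, h2, h3, h4]
    rw [Finset.sum_congr rfl fun i _ => hterm i, Finset.sum_boole]
    have hcc : coversCount f u w
        = (Finset.univ.filter (fun i => ((u ∈ (f i).1 ∧ w ∈ (f i).2)
            ∨ (u ∈ (f i).2 ∧ w ∈ (f i).1)))).card := by
      rw [coversCount, Nat.card_eq_fintype_card, Fintype.card_subtype]
    rw [hcc] at hodd
    exact (odd_iff_cast_eq_one _).mp hodd
  intro v
  have hmain := main_aux k x y hxy hxx hM v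
  have hind : ∀ i : Fin k, x i v + y i v
      = if v ∈ (f i).1 ∪ (f i).2 then 1 else 0 := by
    intro i
    by_cases h1 : v ∈ (f i).1
    · have h2 : v ∉ (f i).2 := Finset.disjoint_left.mp (hdisj i) h1
      simp [hx, hy, h1, h2, Finset.mem_union]
    · by_cases h2 : v ∈ (f i).2 <;> simp [hx, hy, h1, h2, Finset.mem_union]
  rw [Finset.sum_congr rfl fun i _ => hind i, Finset.sum_boole] at hmain
  exact (odd_iff_cast_eq_one _).mpr hmain
end

section
/- Let k ≥ 0 be an integer and let 2n = 8k + 4 or 2n = 8k + 6, and let v_1, …, v_{2n} be the vertices of the complete graph K_{2n}. Then there is no perfect odd cover of K_{2n}, given by n bicliques with partite-set pairs (X_1, Y_1), …, (X_n, Y_n), such that for every 1 ≤ i ≤ n the vertices v_{2i−1} and v_{2i} are of the same type, i.e., for every 1 ≤ j ≤ n, v_{2i−1} ∈ X_j ∪ Y_j if and only if v_{2i} ∈ X_j ∪ Y_j. -/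
open Finset

set_option linter.unusedSectionVars false
set_option maxHeartbeats 1000000

namespace Stmt19Aux


/-- sign character on `ZMod 2`. -/
def eps : ZMod 2 → ℤ := fun a => if a = 0 then 1 else -1

lemma eps_zero : eps 0 = 1 := rfl
lemma eps_add : ∀ a b : ZMod 2, eps (a + b) = eps a * eps b := by decide
lemma eps_of_ne : ∀ a : ZMod 2, a ≠ 0 → eps a = -1 := by decide
lemma zmod2_add_self : ∀ a : ZMod 2, a + a = 0 := by decide
lemma zmod2_eq_one : ∀ a : ZMod 2, a ≠ 0 → a = 1 := by decide
lemma zmod2_eq_of_add_eq_zero : ∀ a b : ZMod 2, a + b = 0 → a = b := by decide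

def chi (w : ℕ) : ℤ := if w % 4 = 0 ∨ w % 4 = 1 then 1 else -1

lemma chi_add_two (w : ℕ) : chi (w + 2) = - chi w := by
  unfold chi
  have : ((w+2) % 4 = 0 ∨ (w+2) % 4 = 1) ↔ ¬ (w % 4 = 0 ∨ w % 4 = 1) := by omega
  split_ifs with h1 h2 h2 <;> simp_all

def Ss (m : ℕ) : ℤ := ∑ w ∈ range (m+1), (m.choose w : ℤ) * chi w
def Ts (m : ℕ) : ℤ := ∑ w ∈ range (m+1), (m.choose w : ℤ) * chi (w+1)

lemma Ss_succ (m : ℕ) : Ss (m+1) = Ss m + Ts m := by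
  unfold Ss Ts
  rw [Finset.sum_range_succ' (fun w => ((m+1).choose w : ℤ) * chi w) (m+1)]
  have h1 : ∀ w, (((m+1).choose (w+1) : ℤ)) * chi (w+1)
      = (m.choose w : ℤ) * chi (w+1) + (m.choose (w+1) : ℤ) * chi (w+1) := by
    intro w
    rw [Nat.choose_succ_succ]
    push_cast; ring
  rw [Finset.sum_congr rfl fun w _ => h1 w, Finset.sum_add_distrib]
  have h2 : ∑ w ∈ range (m+1), (m.choose (w+1) : ℤ) * chi (w+1)
      = ∑ w ∈ range (m+2), (m.choose w : ℤ) * chi w - (m.choose 0 : ℤ) * chi 0 := by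
    rw [Finset.sum_range_succ' (fun w => (m.choose w : ℤ) * chi w) (m+1)]
    ring
  rw [h2]
  rw [show range (m+2) = range ((m+1)+1) from rfl,
    Finset.sum_range_succ (fun w => (m.choose w : ℤ) * chi w) (m+1)]
  simp [Nat.choose_succ_self]
  ring

lemma Ts_succ (m : ℕ) : Ts (m+1) = Ts m - Ss m := by
  unfold Ss Ts
  rw [Finset.sum_range_succ' (fun w => ((m+1).choose w : ℤ) * chi (w+1)) (m+1)]
  have h1 : ∀ w, (((m+1).choose (w+1) : ℤ)) * chi (w+1+1)
      = (m.choose w : ℤ) * (- chi w) + (m.choose (w+1) : ℤ) * chi (w+2) := by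
    intro w
    rw [Nat.choose_succ_succ, show w+1+1 = w+2 from rfl, chi_add_two]
    push_cast; ring
  rw [Finset.sum_congr rfl fun w _ => h1 w, Finset.sum_add_distrib]
  have h2 : ∑ w ∈ range (m+1), (m.choose (w+1) : ℤ) * chi (w+2)
      = ∑ w ∈ range (m+2), (m.choose w : ℤ) * chi (w+1) - (m.choose 0 : ℤ) * chi 1 := by
    rw [Finset.sum_range_succ' (fun w => (m.choose w : ℤ) * chi (w+1)) (m+1)]
    ring
  rw [h2]
  rw [show range (m+2) = range ((m+1)+1) from rfl,
    Finset.sum_range_succ (fun w => (m.choose w : ℤ) * chi (w+1)) (m+1)]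
  have h3 : ∑ w ∈ range (m+1), (m.choose w : ℤ) * (-chi w)
      = - ∑ w ∈ range (m+1), (m.choose w : ℤ) * chi w := by
    rw [← Finset.sum_neg_distrib]; exact Finset.sum_congr rfl fun w _ => by ring
  rw [h3]
  simp [Nat.choose_succ_self, chi]
  ring

lemma Ss_add_four (m : ℕ) : Ss (m+4) = -4 * Ss m ∧ Ts (m+4) = -4 * Ts m := by
  have e1 := Ss_succ m; have e2 := Ts_succ m
  have e3 : Ss (m+2) = Ss (m+1) + Ts (m+1) := Ss_succ (m+1)
  have e4 : Ts (m+2) = Ts (m+1) - Ss (m+1) := Ts_succ (m+1)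
  have e5 : Ss (m+3) = Ss (m+2) + Ts (m+2) := Ss_succ (m+2)
  have e6 : Ts (m+3) = Ts (m+2) - Ss (m+2) := Ts_succ (m+2)
  have e7 : Ss (m+4) = Ss (m+3) + Ts (m+3) := Ss_succ (m+3)
  have e8 : Ts (m+4) = Ts (m+3) - Ss (m+3) := Ts_succ (m+3)
  constructor <;> omega

lemma Ss_add_eight (m : ℕ) : Ss (m+8) = 16 * Ss m := by
  have h1 := (Ss_add_four m).1
  have h2 : Ss (m+8) = -4 * Ss (m+4) := (Ss_add_four (m+4)).1
  omega

lemma Ss_four : Ss 4 = -4 := by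
  unfold Ss; simp [Finset.sum_range_succ, chi]; norm_num [Nat.choose]

lemma Ss_six : Ss 6 = -8 := by
  unfold Ss; simp [Finset.sum_range_succ, chi]; norm_num [Nat.choose]

lemma Ss_val (k n : ℕ) (h : 2 * n = 8 * k + 4 ∨ 2 * n = 8 * k + 6) :
    Ss (2*n) = -(2:ℤ)^n := by
  induction k generalizing n with
  | zero =>
    rcases h with h | h
    · have hn : n = 2 := by omega
      subst hn; rw [show 2*2 = 4 by norm_num, Ss_four]; norm_num
    · have hn : n = 3 := by omega
      subst hn; rw [show 2*3 = 6 by norm_num, Ss_six]; norm_num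
  | succ k ih =>
    obtain ⟨m, rfl⟩ : ∃ m, n = m + 4 := ⟨n - 4, by omega⟩
    have hprev := ih m (by omega)
    rw [show 2 * (m+4) = 2*m + 8 by ring, Ss_add_eight, hprev, pow_add]
    ring

variable {V : Type*} [Fintype V] [DecidableEq V] {n : ℕ}

def ll (X : Fin n → Finset V) (j : Fin n) (u : V → ZMod 2) : ZMod 2 := ∑ p ∈ X j, u p

def qf (X Y : Fin n → Finset V) (u : V → ZMod 2) : ZMod 2 :=
  ∑ j, ll X j u * ll Y j u

def Bf (X Y : Fin n → Finset V) (u v : V → ZMod 2) : ZMod 2 :=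
  ∑ j, (ll X j u * ll Y j v + ll Y j u * ll X j v)

lemma ll_add (X : Fin n → Finset V) (j : Fin n) (u v : V → ZMod 2) :
    ll X j (u + v) = ll X j u + ll X j v := by
  simp [ll, Finset.sum_add_distrib]

lemma ll_zero (X : Fin n → Finset V) (j : Fin n) : ll X j 0 = 0 := by simp [ll]

lemma qf_add (X Y : Fin n → Finset V) (u v : V → ZMod 2) :
    qf X Y (u + v) = qf X Y u + qf X Y v + Bf X Y u v := by
  have h : ∀ j : Fin n, (ll X j u + ll X j v) * (ll Y j u + ll Y j v)
      = ll X j u * ll Y j u + ll X j v * ll Y j v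
        + (ll X j u * ll Y j v + ll Y j u * ll X j v) := fun j => by ring
  simp only [qf, Bf, ll_add, h, Finset.sum_add_distrib]

lemma Bf_add_left (X Y : Fin n → Finset V) (u v w : V → ZMod 2) :
    Bf X Y (u + v) w = Bf X Y u w + Bf X Y v w := by
  have h : ∀ j : Fin n, ((ll X j u + ll X j v) * ll Y j w + (ll Y j u + ll Y j v) * ll X j w)
      = (ll X j u * ll Y j w + ll Y j u * ll X j w)
        + (ll X j v * ll Y j w + ll Y j v * ll X j w) := fun j => by ring
  simp only [Bf, ll_add, h, Finset.sum_add_distrib]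

lemma Bf_add_right (X Y : Fin n → Finset V) (u v w : V → ZMod 2) :
    Bf X Y u (v + w) = Bf X Y u v + Bf X Y u w := by
  have h : ∀ j : Fin n, (ll X j u * (ll Y j v + ll Y j w) + ll Y j u * (ll X j v + ll X j w))
      = (ll X j u * ll Y j v + ll Y j u * ll X j v)
        + (ll X j u * ll Y j w + ll Y j u * ll X j w) := fun j => by ring
  simp only [Bf, ll_add, h, Finset.sum_add_distrib]

lemma Bf_zero_right (X Y : Fin n → Finset V) (u : V → ZMod 2) : Bf X Y u 0 = 0 := by
  simp [Bf, ll_zero]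

lemma eps_sum {ι : Type*} (s : Finset ι) (c : ι → ZMod 2) :
    eps (∑ j ∈ s, c j) = ∏ j ∈ s, eps (c j) := by
  classical
  induction s using Finset.induction_on with
  | empty => simp [eps_zero]
  | @insert a s' ha ih => rw [Finset.sum_insert ha, Finset.prod_insert ha, eps_add, ih]

lemma sum_eps_eq_zero {W : Type*} [Fintype W] [AddCommGroup W]
    (φ : W → ZMod 2) (hadd : ∀ a b, φ (a + b) = φ a + φ b)
    (w₀ : W) (h0 : φ w₀ ≠ 0) : ∑ u : W, eps (φ u) = 0 := by
  have key : ∑ u : W, eps (φ u) = ∑ u : W, eps (φ (w₀ + u)) := by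
    exact (Fintype.sum_bijective (fun u => w₀ + u) (Equiv.addLeft w₀).bijective
      (fun u => eps (φ (w₀ + u))) (fun v => eps (φ v)) (fun x => rfl)).symm
  have h1 : ∀ u : W, eps (φ (w₀ + u)) = - eps (φ u) := by
    intro u
    rw [hadd, eps_add, eps_of_ne _ h0]; ring
  rw [Finset.sum_congr rfl fun u _ => h1 u] at key
  simp only [Finset.sum_neg_distrib] at key
  linarith

lemma structural (X Y : Fin n → Finset V) (hcard : Fintype.card V = 2 * n) :
    (∑ u : V → ZMod 2, eps (qf X Y u)) ≠ -2^n := by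
  classical
  intro hG
  have cardW : ((Fintype.card (V → ZMod 2) : ℕ) : ℤ) = 4^n := by
    rw [Fintype.card_fun, ZMod.card, hcard]
    push_cast
    rw [pow_mul]; norm_num
  -- squared Gauss sum
  have sq : (∑ u : V → ZMod 2, eps (qf X Y u)) * (∑ v : V → ZMod 2, eps (qf X Y v))
      = ∑ w : V → ZMod 2, (eps (qf X Y w) * if (∀ u, Bf X Y u w = 0) then (4^n : ℤ) else 0) := by
    rw [Finset.sum_mul_sum]
    have h1 : ∀ u : V → ZMod 2, ∑ v : V → ZMod 2, eps (qf X Y u) * eps (qf X Y v)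
        = ∑ w : V → ZMod 2, eps (qf X Y w) * eps (Bf X Y u w) := by
      intro u
      refine (Fintype.sum_equiv (Equiv.addLeft u) _ _ fun w => ?_).symm
      show eps (qf X Y w) * eps (Bf X Y u w) = eps (qf X Y u) * eps (qf X Y (u + w))
      rw [qf_add, eps_add, eps_add]
      have hsq : eps (qf X Y u) * eps (qf X Y u) = 1 := by
        rw [← eps_add, zmod2_add_self, eps_zero]
      linear_combination (-(eps (qf X Y w) * eps (Bf X Y u w))) * hsq
    rw [Finset.sum_congr rfl fun u _ => h1 u, Finset.sum_comm]
    refine Finset.sum_congr rfl fun w _ => ?_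
    rw [← Finset.mul_sum]
    congr 1
    by_cases hK : ∀ u, Bf X Y u w = 0
    · rw [if_pos hK]
      have h2 : ∀ u : V → ZMod 2, eps (Bf X Y u w) = 1 := fun u => by rw [hK u, eps_zero]
      rw [Finset.sum_congr rfl fun u _ => h2 u, Finset.sum_const, ← cardW]
      simp
    · rw [if_neg hK]
      push_neg at hK
      obtain ⟨u₀, hu₀⟩ := hK
      exact sum_eps_eq_zero (fun u => Bf X Y u w) (fun a b => Bf_add_left X Y a b w) u₀ hu₀
  rw [hG] at sq
  have h4 : (-2^n : ℤ) * (-2^n) = 4^n := by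
    rw [neg_mul_neg, ← pow_add, ← two_mul, pow_mul]; norm_num
  rw [h4] at sq
  set K : Finset (V → ZMod 2) := univ.filter (fun w => ∀ u, Bf X Y u w = 0) with hKdef
  have hKsum : ∑ w ∈ K, eps (qf X Y w) = 1 := by
    have hstep : ∑ w : V → ZMod 2, (eps (qf X Y w) * if (∀ u, Bf X Y u w = 0) then (4^n : ℤ) else 0)
        = 4^n * ∑ w ∈ K, eps (qf X Y w) := by
      rw [hKdef, Finset.sum_filter, Finset.mul_sum]
      refine Finset.sum_congr rfl fun w _ => ?_
      split_ifs <;> ring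
    rw [hstep] at sq
    have h40 : (4:ℤ)^n ≠ 0 := by positivity
    have := mul_left_cancel₀ h40 (by linarith [sq] : (4:ℤ)^n * 1 = 4^n * ∑ w ∈ K, eps (qf X Y w))
    linarith
  by_cases hq0 : ∀ w ∈ K, qf X Y w = 0
  · -- K = {0}, hence the 2n linear functionals are jointly injective, G = 2^n > 0.
    have hcardK : (#K : ℤ) = 1 := by
      rw [← hKsum, Finset.sum_congr rfl fun w hw => by rw [hq0 w hw, eps_zero]]
      simp
    have h0K : (0 : V → ZMod 2) ∈ K := by
      rw [hKdef, Finset.mem_filter]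
      exact ⟨Finset.mem_univ _, fun u => Bf_zero_right X Y u⟩
    have hKeq : K = {0} := by
      obtain ⟨x, hx⟩ := Finset.card_eq_one.mp (by exact_mod_cast hcardK)
      rw [hx] at h0K ⊢
      rw [Finset.mem_singleton] at h0K
      rw [h0K]
    set Φ : (V → ZMod 2) → (Fin n → ZMod 2 × ZMod 2) :=
      fun u => fun j => (ll X j u, ll Y j u) with hΦdef
    have hΦinj : Function.Injective Φ := by
      intro a b hab
      have hker : ∀ j, ll X j (a + b) = 0 ∧ ll Y j (a + b) = 0 := by
        intro j
        have h1 : ll X j a = ll X j b ∧ ll Y j a = ll Y j b := by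
          have := congrFun hab j
          exact ⟨congrArg Prod.fst this, congrArg Prod.snd this⟩
        rw [ll_add, ll_add, h1.1, h1.2]
        exact ⟨zmod2_add_self _, zmod2_add_self _⟩
      have hmem : (a + b) ∈ K := by
        rw [hKdef, Finset.mem_filter]
        refine ⟨Finset.mem_univ _, fun u => ?_⟩
        unfold Bf
        refine Finset.sum_eq_zero fun j _ => ?_
        rw [(hker j).1, (hker j).2]; ring
      rw [hKeq, Finset.mem_singleton] at hmem
      funext p
      exact zmod2_eq_of_add_eq_zero _ _ (congrFun hmem p)
    have hΦbij : Function.Bijective Φ :=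
      (Fintype.bijective_iff_injective_and_card Φ).mpr ⟨hΦinj, by
        rw [Fintype.card_fun, Fintype.card_fun, ZMod.card, hcard, Fintype.card_prod,
          ZMod.card, Fintype.card_fin, pow_mul]
        norm_num⟩
    have hsum2 : ∑ a : ZMod 2 × ZMod 2, eps (a.1 * a.2) = 2 := by decide
    have hG2 : (∑ u : V → ZMod 2, eps (qf X Y u)) = 2^n := by
      have hbij := Fintype.sum_bijective Φ hΦbij (fun u => eps (qf X Y u))
        (fun g => eps (∑ j, (g j).1 * (g j).2)) (fun u => rfl)
      rw [hbij]
      rw [Finset.sum_congr rfl fun g _ => eps_sum univ (fun j => (g j).1 * (g j).2)]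
      have hps := Finset.prod_univ_sum (fun _ : Fin n => (univ : Finset (ZMod 2 × ZMod 2)))
        (fun _ a => eps (a.1 * a.2))
      rw [Fintype.piFinset_univ] at hps
      rw [← hps, Finset.prod_congr rfl fun j _ => hsum2]
      simp
    rw [hG2] at hG
    have : (0:ℤ) < 2^n := by positivity
    linarith
  · push_neg at hq0
    obtain ⟨w₀, hw₀K, hw₀⟩ := hq0
    have hw₀self : w₀ + w₀ = 0 := by funext p; exact zmod2_add_self _
    have hBw₀ : ∀ u, Bf X Y u w₀ = 0 := by
      have h := hw₀K
      rw [hKdef, Finset.mem_filter] at h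
      exact h.2
    have hflip : ∑ w ∈ K, eps (qf X Y w) = ∑ w ∈ K, eps (qf X Y (w + w₀)) := by
      refine Finset.sum_nbij' (fun w => w + w₀) (fun w => w + w₀) ?_ ?_ ?_ ?_ ?_
      · intro a ha
        rw [hKdef, Finset.mem_filter] at ha ⊢
        exact ⟨Finset.mem_univ _, fun u => by
          rw [Bf_add_right, ha.2 u, hBw₀ u, add_zero]⟩
      · intro a ha
        rw [hKdef, Finset.mem_filter] at ha ⊢
        exact ⟨Finset.mem_univ _, fun u => by
          rw [Bf_add_right, ha.2 u, hBw₀ u, add_zero]⟩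
      · intro a _; show a + w₀ + w₀ = a; rw [add_assoc, hw₀self, add_zero]
      · intro a _; show a + w₀ + w₀ = a; rw [add_assoc, hw₀self, add_zero]
      · intro a _; show eps (qf X Y a) = eps (qf X Y (a + w₀ + w₀))
        rw [add_assoc, hw₀self, add_zero]
    have hneg : ∀ w, eps (qf X Y (w + w₀)) = - eps (qf X Y w) := by
      intro w
      rw [qf_add, hBw₀ w, add_zero, zmod2_eq_one _ hw₀, eps_add]
      have : eps 1 = -1 := rfl
      rw [this]; ring
    have hKsum2 := hKsum
    rw [hflip, Finset.sum_congr rfl fun w _ => hneg w, Finset.sum_neg_distrib] at hKsum2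
    linarith

lemma zmod2_ite : ∀ a : ZMod 2, a = if a = 1 then 1 else 0 := by decide

variable [LinearOrder V]

lemma parity_of (tt m : ℕ) (h : 2 * tt + m = m * m) :
    tt % 2 = 0 ↔ (m % 4 = 0 ∨ m % 4 = 1) := by
  obtain ⟨a, r, hr, rfl⟩ : ∃ a r, r < 4 ∧ m = 4*a + r :=
    ⟨m/4, m%4, Nat.mod_lt _ (by norm_num), by omega⟩
  have hsq : (4*a+r) * (4*a+r) = 16*(a*a) + 8*(a*r) + r*r := by ring
  rw [hsq] at h
  interval_cases r <;> omega

lemma comb (X Y : Fin n → Finset V) (hdisj : ∀ j, Disjoint (X j) (Y j))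
    (hodd : ∀ p q : V, p ≠ q →
      Odd (#(univ.filter (fun j : Fin n => (p ∈ X j ∧ q ∈ Y j) ∨ (p ∈ Y j ∧ q ∈ X j)))))
    (u : V → ZMod 2) :
    eps (qf X Y u) = chi (#(univ.filter (fun p => u p = 1))) := by
  classical
  set U : Finset V := univ.filter (fun p => u p = 1) with hU
  set d : V → V → ℕ := fun p q => #(univ.filter (fun j : Fin n => p ∈ X j ∧ q ∈ Y j)) with hd
  set m : ℕ := #U with hm
  set T : Finset (V × V) := (U ×ˢ U).filter (fun x => x.1 < x.2) with hT
  -- `ll` as a cardinality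
  have hll : ∀ (Z : Fin n → Finset V) (j : Fin n), ll Z j u = ((#(Z j ∩ U) : ℕ) : ZMod 2) := by
    intro Z j
    rw [ll, Finset.sum_congr rfl fun p _ => zmod2_ite (u p), Finset.sum_boole]
    congr 2
    ext p
    simp [hU, Finset.mem_filter, Finset.mem_inter]
  have hq1 : qf X Y u = ((∑ j, #(X j ∩ U) * #(Y j ∩ U) : ℕ) : ZMod 2) := by
    rw [qf]; push_cast
    exact Finset.sum_congr rfl fun j _ => by rw [hll X j, hll Y j]
  -- double counting
  have hcount : ∀ j : Fin n, #(X j ∩ U) * #(Y j ∩ U)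
      = ∑ p ∈ U, ∑ q ∈ U, (if p ∈ X j ∧ q ∈ Y j then 1 else 0) := by
    intro j
    have hx : ∀ (Z : Finset V), #(Z ∩ U) = ∑ p ∈ U, (if p ∈ Z then 1 else 0) := by
      intro Z
      rw [Finset.sum_boole, Nat.cast_id, Finset.filter_mem_eq_inter, Finset.inter_comm]
    rw [hx (X j), hx (Y j), Finset.sum_mul_sum]
    refine Finset.sum_congr rfl fun p _ => Finset.sum_congr rfl fun q _ => ?_
    by_cases h1 : p ∈ X j <;> by_cases h2 : q ∈ Y j <;> simp [h1, h2]
  have hd2 : (∑ j, #(X j ∩ U) * #(Y j ∩ U)) = ∑ p ∈ U, ∑ q ∈ U, d p q := by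
    rw [Finset.sum_congr rfl fun j _ => hcount j, Finset.sum_comm]
    refine Finset.sum_congr rfl fun p _ => ?_
    rw [Finset.sum_comm]
    refine Finset.sum_congr rfl fun q _ => ?_
    rw [hd, Finset.sum_boole, Nat.cast_id]
  -- symmetric pair counts are odd
  have hdsymm : ∀ p q : V, p ≠ q → ((d p q + d q p : ℕ) : ZMod 2) = 1 := by
    intro p q hpq
    have hdisj' : Disjoint (univ.filter (fun j : Fin n => p ∈ X j ∧ q ∈ Y j))
        (univ.filter (fun j : Fin n => p ∈ Y j ∧ q ∈ X j)) := by
      rw [Finset.disjoint_left]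
      intro j h1 h2
      rw [Finset.mem_filter] at h1 h2
      exact (Finset.disjoint_left.mp (hdisj j)) h1.2.1 h2.2.1
    have hcup : d p q + d q p
        = #(univ.filter (fun j : Fin n => (p ∈ X j ∧ q ∈ Y j) ∨ (p ∈ Y j ∧ q ∈ X j))) := by
      have hswap2 : #(univ.filter (fun j : Fin n => q ∈ X j ∧ p ∈ Y j))
          = #(univ.filter (fun j : Fin n => p ∈ Y j ∧ q ∈ X j)) := by
        congr 1
        ext j
        simp only [Finset.mem_filter]
        tauto
      simp only [hd]
      rw [Finset.filter_or, Finset.card_union_of_disjoint hdisj']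
      omega
    rw [hcup]
    obtain ⟨t, ht⟩ := hodd p q hpq
    rw [ht]
    push_cast
    have h2 : (2 : ZMod 2) = 0 := by decide
    rw [h2]
    ring
  -- the set equalities for the three parts
  have hlt : ((U ×ˢ U).filter (fun x => ¬x.1 = x.2)).filter (fun x => x.1 < x.2) = T := by
    rw [hT, Finset.filter_filter]
    ext x
    simp only [Finset.mem_filter]
    constructor
    · rintro ⟨h1, _, h3⟩; exact ⟨h1, h3⟩
    · rintro ⟨h1, h2⟩; exact ⟨h1, ne_of_lt h2, h2⟩
  have hgt : ((U ×ˢ U).filter (fun x => ¬x.1 = x.2)).filter (fun x => ¬x.1 < x.2)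
      = (U ×ˢ U).filter (fun x => x.2 < x.1) := by
    rw [Finset.filter_filter]
    ext x
    simp only [Finset.mem_filter]
    constructor
    · rintro ⟨h1, h2, h3⟩
      exact ⟨h1, lt_of_le_of_ne (not_lt.mp h3) (fun e => h2 e.symm)⟩
    · rintro ⟨h1, h2⟩
      exact ⟨h1, fun e => absurd h2 (by rw [e]; exact lt_irrefl _), not_lt.mpr h2.le⟩
  -- the parity computation
  have hsplit : ((∑ p ∈ U, ∑ q ∈ U, d p q : ℕ) : ZMod 2) = ((#T : ℕ) : ZMod 2) := by
    push_cast
    rw [← Finset.sum_product' U U (fun p q => ((d p q : ℕ) : ZMod 2))]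
    rw [← Finset.sum_filter_add_sum_filter_not (U ×ˢ U) (fun x => x.1 = x.2)
      (fun x => ((d x.1 x.2 : ℕ) : ZMod 2))]
    have hdiag : ∑ x ∈ (U ×ˢ U).filter (fun x => x.1 = x.2), ((d x.1 x.2 : ℕ) : ZMod 2) = 0 := by
      refine Finset.sum_eq_zero fun x hx => ?_
      rw [Finset.mem_filter] at hx
      have hz : d x.1 x.2 = 0 := by
        rw [hd, Finset.card_eq_zero, Finset.filter_eq_empty_iff]
        intro j _
        rw [← hx.2]
        rintro ⟨h1', h2'⟩
        exact (Finset.disjoint_left.mp (hdisj j)) h1' h2'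
      rw [hz, Nat.cast_zero]
    rw [hdiag, zero_add]
    rw [← Finset.sum_filter_add_sum_filter_not ((U ×ˢ U).filter (fun x => ¬x.1 = x.2))
      (fun x => x.1 < x.2) (fun x => ((d x.1 x.2 : ℕ) : ZMod 2))]
    rw [hlt, hgt]
    have hswap : ∑ x ∈ (U ×ˢ U).filter (fun x => x.2 < x.1), ((d x.1 x.2 : ℕ) : ZMod 2)
        = ∑ x ∈ T, ((d x.2 x.1 : ℕ) : ZMod 2) := by
      refine Finset.sum_nbij' (fun x => (x.2, x.1)) (fun x => (x.2, x.1)) ?_ ?_ ?_ ?_ ?_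
      · intro a ha
        rw [Finset.mem_filter, Finset.mem_product] at ha
        rw [hT, Finset.mem_filter, Finset.mem_product]
        exact ⟨⟨ha.1.2, ha.1.1⟩, ha.2⟩
      · intro a ha
        rw [hT, Finset.mem_filter, Finset.mem_product] at ha
        rw [Finset.mem_filter, Finset.mem_product]
        exact ⟨⟨ha.1.2, ha.1.1⟩, ha.2⟩
      · intro a _; rfl
      · intro a _; rfl
      · intro a _; rfl
    rw [hswap, ← Finset.sum_add_distrib]
    have hone : ∀ x ∈ T, ((d x.1 x.2 : ℕ) : ZMod 2) + ((d x.2 x.1 : ℕ) : ZMod 2) = 1 := by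
      intro x hx
      rw [hT, Finset.mem_filter] at hx
      have hh := hdsymm x.1 x.2 (ne_of_lt hx.2)
      push_cast at hh
      exact hh
    rw [Finset.sum_congr rfl hone, Finset.sum_const]
    simp
  -- the cardinality relation
  have hcardT : 2 * #T + m = m * m := by
    have e1 : #((U ×ˢ U).filter (fun x => x.1 = x.2))
        + #((U ×ˢ U).filter (fun x => ¬x.1 = x.2)) = #(U ×ˢ U) :=
      Finset.card_filter_add_card_filter_not _
    have e2 : #(((U ×ˢ U).filter (fun x => ¬x.1 = x.2)).filter (fun x => x.1 < x.2))
        + #(((U ×ˢ U).filter (fun x => ¬x.1 = x.2)).filter (fun x => ¬x.1 < x.2))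
        = #((U ×ˢ U).filter (fun x => ¬x.1 = x.2)) :=
      Finset.card_filter_add_card_filter_not _
    rw [hlt, hgt] at e2
    have e3 : #((U ×ˢ U).filter (fun x => x.2 < x.1)) = #T := by
      refine Finset.card_nbij' (fun x => (x.2, x.1)) (fun x => (x.2, x.1)) ?_ ?_ ?_ ?_
      · intro a ha
        rw [Finset.mem_coe, Finset.mem_filter, Finset.mem_product] at ha
        rw [hT, Finset.mem_coe, Finset.mem_filter, Finset.mem_product]
        exact ⟨⟨ha.1.2, ha.1.1⟩, ha.2⟩
      · intro a ha
        rw [hT, Finset.mem_coe, Finset.mem_filter, Finset.mem_product] at ha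
        rw [Finset.mem_coe, Finset.mem_filter, Finset.mem_product]
        exact ⟨⟨ha.1.2, ha.1.1⟩, ha.2⟩
      · intro a _; rfl
      · intro a _; rfl
    have e4 : #((U ×ˢ U).filter (fun x => x.1 = x.2)) = m := by
      rw [hm]
      refine Finset.card_nbij' (fun x => x.1) (fun p => (p, p)) ?_ ?_ ?_ ?_
      · intro a ha
        rw [Finset.mem_coe, Finset.mem_filter, Finset.mem_product] at ha
        exact ha.1.1
      · intro p hp
        rw [Finset.mem_coe, Finset.mem_filter, Finset.mem_product]
        exact ⟨⟨hp, hp⟩, rfl⟩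
      · intro a ha
        rw [Finset.mem_coe, Finset.mem_filter] at ha
        exact Prod.ext rfl ha.2
      · intro p _; rfl
    have e5 : #(U ×ˢ U) = m * m := by rw [Finset.card_product, hm]
    omega
  -- conclude
  rw [hq1, hd2, hsplit]
  have hpar := parity_of (#T) m hcardT
  have hc0 : ((#T : ℕ) : ZMod 2) = 0 ↔ #T % 2 = 0 := by
    rw [ZMod.natCast_eq_zero_iff, Nat.dvd_iff_mod_eq_zero]
  unfold eps chi
  split_ifs with h1 h2 h2
  · rfl
  · exact absurd (hpar.mp (hc0.mp h1)) h2
  · exact absurd (hc0.mpr (hpar.mpr h2)) h1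
  · rfl

lemma Gval (X Y : Fin n → Finset V) (hdisj : ∀ j, Disjoint (X j) (Y j))
    (hodd : ∀ p q : V, p ≠ q →
      Odd (#(univ.filter (fun j : Fin n => (p ∈ X j ∧ q ∈ Y j) ∨ (p ∈ Y j ∧ q ∈ X j))))) :
    (∑ u : V → ZMod 2, eps (qf X Y u)) = Ss (Fintype.card V) := by
  classical
  rw [Finset.sum_congr rfl fun u _ => comb X Y hdisj hodd u]
  have hbij : (∑ u : V → ZMod 2, chi (#(univ.filter (fun p => u p = 1))))
      = ∑ U ∈ (univ : Finset V).powerset, chi (#U) := by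
    refine Finset.sum_nbij' (fun u => univ.filter (fun p => u p = 1))
      (fun U => fun p => if p ∈ U then 1 else 0) ?_ ?_ ?_ ?_ ?_
    · intro a _
      exact Finset.mem_powerset.mpr (Finset.filter_subset _ _)
    · intro a _
      exact Finset.mem_univ _
    · intro a _
      funext p
      simp only [Finset.mem_filter, Finset.mem_univ, true_and]
      exact (zmod2_ite (a p)).symm
    · intro U _
      ext p
      simp only [Finset.mem_filter, Finset.mem_univ, true_and]
      by_cases hp : p ∈ U <;> simp [hp]
    · intro a _
      rfl
  rw [hbij, Finset.sum_powerset ((univ : Finset V)) (fun U => chi #U), Finset.card_univ]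
  unfold Ss
  refine Finset.sum_congr rfl fun w hw => ?_
  have hconst : ∀ t ∈ Finset.powersetCard w (univ : Finset V), chi #t = chi w := by
    intro t ht
    rw [(Finset.mem_powersetCard.mp ht).2]
  rw [Finset.sum_congr rfl hconst, Finset.sum_const, Finset.card_powersetCard, Finset.card_univ]
  simp [nsmul_eq_mul, mul_comm]


end Stmt19Aux

/-- For `2n = 8k + 4` or `2n = 8k + 6`, with the vertices of `K_{2n}` paired
up as `(v_{2i-1}, v_{2i})` (here the pair `(2i, 2i+1)` for `i : Fin n`), there is no perfect
odd cover of `K_{2n}` in which the two vertices of each pair are of the same type, i.e. each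
pair meets exactly the same bicliques. -/
theorem stmt19 (k n : ℕ) (h : 2 * n = 8 * k + 4 ∨ 2 * n = 8 * k + 6)
    (f : Fin n → Finset (Fin (2 * n)) × Finset (Fin (2 * n)))
    (hpair : ∀ i j : Fin n,
      (⟨2 * (i : ℕ), by have := i.isLt; omega⟩ : Fin (2 * n)) ∈ (f j).1 ∪ (f j).2 ↔
      (⟨2 * (i : ℕ) + 1, by have := i.isLt; omega⟩ : Fin (2 * n)) ∈ (f j).1 ∪ (f j).2) :
    ¬ IsOddCover (⊤ : SimpleGraph (Fin (2 * n))) f := by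
  classical
  intro hcov
  obtain ⟨hdisj, hadj⟩ := hcov
  set X : Fin n → Finset (Fin (2*n)) := fun j => (f j).1 with hX
  set Y : Fin n → Finset (Fin (2*n)) := fun j => (f j).2 with hY
  have hodd : ∀ p q : Fin (2*n), p ≠ q →
      Odd (#(univ.filter (fun j : Fin n => (p ∈ X j ∧ q ∈ Y j) ∨ (p ∈ Y j ∧ q ∈ X j)))) := by
    intro p q hpq
    have h1 := (hadj p q hpq).mp (by simpa using hpq)
    rwa [coversCount, Nat.card_eq_fintype_card, Fintype.card_subtype] at h1
  have hG := Stmt19Aux.Gval X Y (fun j => hdisj j) hodd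
  rw [Fintype.card_fin] at hG
  have hS := Stmt19Aux.Ss_val k n h
  exact Stmt19Aux.structural X Y (Fintype.card_fin _) (hG.trans hS)
end
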